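/- Let M = (M_1,…,M_n) and N = (N_1,…,N_n) be n-outcome POVMs on ℂ^d, let Λ be an n'×n left-stochastic matrix (real entries Λ_{ij} ≥ 0 with ∑_{i=1}^{n'} Λ_{ij} = 1 for every j), and let Φ be a unital quantum channel on ℂ^d with Hilbert–Schmidt adjoint Φ*. Then the n'-outcome POVMs with effects (∑_{j=1}^n Λ_{ij} Φ*(M_j))_{i=1,…,n'} and (∑_{j=1}^n Λ_{ij} Φ*(N_j))_{i=1,…,n'} satisfy d_av^m(Λ∘M∘Φ, Λ∘N∘Φ) ≤ d_av^m(M, N). -/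

import Mathlib

open Matrix Kronecker ComplexOrder

/-- The Hilbert–Schmidt (Frobenius) norm of a complex matrix. -/
noncomputable def hsNorm {n : Type*} [Fintype n] (A : Matrix n n ℂ) : ℝ :=
  Real.sqrt ((Matrix.trace (Aᴴ * A)).re)

/-- A POVM: a tuple of positive semidefinite effects summing to the identity. -/
def IsPOVM {n : Type*} [Fintype n] [DecidableEq n] {ι : Type*} [Fintype ι]
    (M : ι → Matrix n n ℂ) : Prop :=
  (∀ i, (M i).PosSemidef) ∧ ∑ i, M i = 1

/-- The average-case distance between POVMs on a `Fintype.card n`-dimensional space. -/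
noncomputable def davM {n : Type*} [Fintype n] {ι : Type*} [Fintype ι]
    (M N : ι → Matrix n n ℂ) : ℝ :=
  (1 / (2 * (Fintype.card n : ℝ))) *
    ∑ i, Real.sqrt ((hsNorm (M i - N i)) ^ 2 + ((Matrix.trace (M i - N i)).re) ^ 2)

/-- The (normalized) Choi matrix `J_Λ = (1/d) ∑ᵢⱼ E_ij ⊗ Λ(E_ij)` of a linear map on matrices. -/
noncomputable def choi {n : Type*} [Fintype n] [DecidableEq n]
    (Λ : Matrix n n ℂ →ₗ[ℂ] Matrix n n ℂ) : Matrix (n × n) (n × n) ℂ :=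
  ((Fintype.card n : ℂ))⁻¹ •
    ∑ i, ∑ j, (Matrix.single i j (1 : ℂ)) ⊗ₖ Λ (Matrix.single i j (1 : ℂ))

/-- A quantum channel: a completely positive (positive semidefinite Choi matrix)
trace-preserving linear map. -/
def IsChannel {n : Type*} [Fintype n] [DecidableEq n]
    (Λ : Matrix n n ℂ →ₗ[ℂ] Matrix n n ℂ) : Prop :=
  (choi Λ).PosSemidef ∧ ∀ X, (Λ X).trace = X.trace


noncomputable def toE {d : ℕ} :
    Matrix (Fin d) (Fin d) ℂ →ₗ[ℂ] EuclideanSpace ℂ (Fin d × Fin d) where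
  toFun A := (WithLp.equiv 2 _).symm (fun p => A p.1 p.2)
  map_add' _ _ := rfl
  map_smul' _ _ := rfl

lemma inner_toE {d : ℕ} (A B : Matrix (Fin d) (Fin d) ℂ) :
    (inner ℂ (toE A) (toE B) : ℂ) = Matrix.trace (Aᴴ * B) := by
  simp only [PiLp.inner_apply, toE, LinearMap.coe_mk, AddHom.coe_mk, WithLp.equiv_symm_apply, PiLp.toLp_apply,
    RCLike.inner_apply, Matrix.trace, Matrix.diag, Matrix.mul_apply, Matrix.conjTranspose_apply]
  rw [Fintype.sum_prod_type, Finset.sum_comm]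
  simp [Complex.star_def, mul_comm]

lemma hsNorm_eq {d : ℕ} (A : Matrix (Fin d) (Fin d) ℂ) : hsNorm A = ‖toE A‖ := by
  rw [hsNorm, ← inner_toE]
  rw [show ((inner ℂ (toE A) (toE A) : ℂ)).re = RCLike.re (inner ℂ (toE A) (toE A) : ℂ) from rfl]
  rw [inner_self_eq_norm_sq (𝕜 := ℂ)]
  exact Real.sqrt_sq (norm_nonneg _)

lemma hsNorm_nonneg {d : ℕ} (A : Matrix (Fin d) (Fin d) ℂ) : 0 ≤ hsNorm A :=
  Real.sqrt_nonneg _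

lemma hsNorm_sq {d : ℕ} (A : Matrix (Fin d) (Fin d) ℂ) :
    hsNorm A ^ 2 = (Matrix.trace (Aᴴ * A)).re := by
  rw [hsNorm_eq, ← inner_toE]
  rw [show ((inner ℂ (toE A) (toE A) : ℂ)).re = RCLike.re (inner ℂ (toE A) (toE A) : ℂ) from rfl]
  exact (inner_self_eq_norm_sq (𝕜 := ℂ) _).symm

lemma re_trace_le {d : ℕ} (A B : Matrix (Fin d) (Fin d) ℂ) :
    (Matrix.trace (Aᴴ * B)).re ≤ hsNorm A * hsNorm B := by
  rw [hsNorm_eq, hsNorm_eq, ← inner_toE]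
  rw [show ((inner ℂ (toE A) (toE B) : ℂ)).re = RCLike.re (inner ℂ (toE A) (toE B) : ℂ) from rfl]
  exact re_inner_le_norm (𝕜 := ℂ) _ _


lemma g_tri (a b c e : ℝ) : Real.sqrt ((a+b)^2 + (c+e)^2) ≤
    Real.sqrt (a^2+c^2) + Real.sqrt (b^2+e^2) := by
  rw [← Complex.norm_add_mul_I, ← Complex.norm_add_mul_I, ← Complex.norm_add_mul_I]
  rw [show (((a+b : ℝ)):ℂ) + ((c+e : ℝ):ℂ)*Complex.I
      = ((a:ℂ) + c*Complex.I) + ((b:ℂ) + e*Complex.I) by push_cast; ring]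
  exact norm_add_le _ _

lemma g_smul (t x y : ℝ) (ht : 0 ≤ t) :
    Real.sqrt ((t*x)^2 + (t*y)^2) = t * Real.sqrt (x^2+y^2) := by
  rw [mul_pow, mul_pow, ← mul_add, Real.sqrt_mul (sq_nonneg t), Real.sqrt_sq ht]

lemma g_mono (x x' y : ℝ) (hx : 0 ≤ x) (hxx : x ≤ x') :
    Real.sqrt (x^2+y^2) ≤ Real.sqrt (x'^2+y^2) :=
  Real.sqrt_le_sqrt (by nlinarith)

lemma g_sum {ι : Type*} (s : Finset ι) (f h : ι → ℝ) :
    Real.sqrt ((∑ i ∈ s, f i)^2 + (∑ i ∈ s, h i)^2) ≤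
      ∑ i ∈ s, Real.sqrt (f i ^2 + h i ^2) := by
  induction s using Finset.cons_induction with
  | empty => simp
  | cons a s ha ih =>
      rw [Finset.sum_cons, Finset.sum_cons, Finset.sum_cons]
      exact (g_tri _ _ _ _).trans (add_le_add_right ih _)

lemma choi_apply {d : ℕ} (Φ : Matrix (Fin d) (Fin d) ℂ →ₗ[ℂ] Matrix (Fin d) (Fin d) ℂ)
    (i j k l : Fin d) :
    choi Φ (i, k) (j, l) = ((d : ℂ))⁻¹ * Φ (Matrix.single i j 1) k l := by
  simp [choi, Matrix.sum_apply, Matrix.kroneckerMap_apply, Matrix.single, ite_and,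
    Finset.sum_ite_eq, Finset.sum_ite_eq']

lemma kraus {d : ℕ} (hd : 0 < d)
    (Φ : Matrix (Fin d) (Fin d) ℂ →ₗ[ℂ] Matrix (Fin d) (Fin d) ℂ)
    (hps : (choi Φ).PosSemidef) :
    ∃ L : (Fin d × Fin d) → Matrix (Fin d) (Fin d) ℂ,
      ∀ Y, Φ Y = (d : ℂ) • ∑ m, L m * Y * (L m)ᴴ := by
  obtain ⟨B, hB⟩ : ∃ B : Matrix (Fin d × Fin d) (Fin d × Fin d) ℂ, choi Φ = Bᴴ * B := by
    open scoped MatrixOrder in exact CStarAlgebra.nonneg_iff_eq_star_mul_self.mp hps.nonneg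
  refine ⟨fun m => Matrix.of (fun k i => star (B m (i, k))), fun Y => ?_⟩
  have hd' : (d : ℂ) ≠ 0 := Nat.cast_ne_zero.mpr hd.ne'
  -- expand Y in the standard basis
  nth_rewrite 1 [Matrix.matrix_eq_sum_single Y]
  rw [map_sum]
  simp_rw [map_sum]
  ext k l
  rw [Matrix.sum_apply]
  simp_rw [Matrix.sum_apply]
  have key : ∀ i j, Φ (Matrix.single i j (Y i j)) k l
      = Y i j * (d : ℂ) * (choi Φ (i, k) (j, l)) := by
    intro i j
    rw [show Matrix.single i j (Y i j) = Y i j • Matrix.single i j 1 by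
      rw [Matrix.smul_single]; rw [smul_eq_mul, mul_one]]
    rw [_root_.map_smul, Matrix.smul_apply, choi_apply, smul_eq_mul]
    field_simp
  simp_rw [key, hB]
  rw [Matrix.smul_apply, Matrix.sum_apply]
  simp only [Matrix.mul_apply, Matrix.conjTranspose_apply, Matrix.of_apply, star_star,
    smul_eq_mul, Finset.mul_sum, Finset.sum_mul]
  conv_lhs => rw [Finset.sum_comm]
  conv_lhs => enter [2, b]; rw [Finset.sum_comm]
  conv_lhs => rw [Finset.sum_comm]
  exact Finset.sum_congr rfl fun m _ => Finset.sum_congr rfl fun b _ =>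
    Finset.sum_congr rfl fun a _ => by ring


lemma eq_one_of_traces (G : Matrix (Fin d) (Fin d) ℂ)
    (h : ∀ X, Matrix.trace (G * X) = Matrix.trace X) : G = 1 := by
  ext i j
  have h1 := h (Matrix.single j i 1)
  have h2 : Matrix.trace (G * Matrix.single j i 1) = G i j := by
    simp [Matrix.trace, Matrix.diag, Matrix.mul_apply, Matrix.single, ite_and]
  have h3 : Matrix.trace (Matrix.single j i (1:ℂ)) = (1 : Matrix (Fin d) (Fin d) ℂ) i j := by
    simp [Matrix.trace, Matrix.diag, Matrix.single, Matrix.one_apply, ite_and, eq_comm]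
  rw [h2, h3] at h1
  exact h1

lemma sum_trace_left {ι : Type*} [Fintype ι] (T : ι → Matrix (Fin d) (Fin d) ℂ)
    (X : Matrix (Fin d) (Fin d) ℂ) (c : ℂ) (h : ∑ i, T i * (T i)ᴴ = c • 1) :
    ∑ i, Matrix.trace (((T i)ᴴ * X)ᴴ * ((T i)ᴴ * X)) = c * Matrix.trace (Xᴴ * X) := by
  have step : ∀ i : ι, Matrix.trace (((T i)ᴴ * X)ᴴ * ((T i)ᴴ * X))
      = Matrix.trace (Xᴴ * (T i * (T i)ᴴ * X)) := by
    intro i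
    simp only [Matrix.conjTranspose_mul, Matrix.conjTranspose_conjTranspose, Matrix.mul_assoc]
  simp_rw [step]
  rw [← Matrix.trace_sum, ← Finset.mul_sum, ← Finset.sum_mul, h,
    Matrix.smul_mul, Matrix.one_mul, Matrix.mul_smul, Matrix.trace_smul, smul_eq_mul]

lemma sum_trace_right {ι : Type*} [Fintype ι] (T : ι → Matrix (Fin d) (Fin d) ℂ)
    (X : Matrix (Fin d) (Fin d) ℂ) (c : ℂ) (h : ∑ i, (T i)ᴴ * T i = c • 1) :
    ∑ i, Matrix.trace ((X * (T i)ᴴ)ᴴ * (X * (T i)ᴴ)) = c * Matrix.trace (Xᴴ * X) := by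
  have step : ∀ i : ι, Matrix.trace ((X * (T i)ᴴ)ᴴ * (X * (T i)ᴴ))
      = Matrix.trace (Xᴴ * (X * ((T i)ᴴ * T i))) := by
    intro i
    rw [Matrix.conjTranspose_mul, Matrix.conjTranspose_conjTranspose]
    simp only [Matrix.mul_assoc]
    rw [Matrix.trace_mul_comm]
    simp only [Matrix.mul_assoc]
  simp_rw [step]
  rw [← Matrix.trace_sum, ← Finset.mul_sum, ← Finset.mul_sum, h,
    Matrix.mul_smul, Matrix.mul_one, Matrix.mul_smul, Matrix.trace_smul, smul_eq_mul]

lemma hsNorm_channel_le {d : ℕ} (hd : 0 < d)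
    (Φ : Matrix (Fin d) (Fin d) ℂ →ₗ[ℂ] Matrix (Fin d) (Fin d) ℂ)
    (hps : (choi Φ).PosSemidef) (htp : ∀ X, (Φ X).trace = X.trace) (hU : Φ 1 = 1)
    (X : Matrix (Fin d) (Fin d) ℂ) : hsNorm (Φ X) ≤ hsNorm X := by
  obtain ⟨L, hL⟩ := kraus hd Φ hps
  have hd' : (d : ℂ) ≠ 0 := Nat.cast_ne_zero.mpr hd.ne'
  have huni : ∑ m, L m * (L m)ᴴ = ((d:ℂ))⁻¹ • (1 : Matrix (Fin d) (Fin d) ℂ) := by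
    have h1 : (d:ℂ) • ∑ m, L m * (L m)ᴴ = (1 : Matrix (Fin d) (Fin d) ℂ) := by
      have h0 := hL 1
      rw [hU] at h0
      simpa using h0.symm
    rw [← h1, smul_smul, inv_mul_cancel₀ hd', one_smul]
  have htr : ∑ m, (L m)ᴴ * L m = ((d:ℂ))⁻¹ • (1 : Matrix (Fin d) (Fin d) ℂ) := by
    have hG : ∀ Y, Matrix.trace (((d:ℂ) • ∑ m, (L m)ᴴ * L m) * Y) = Matrix.trace Y := by
      intro Y
      rw [← htp Y, hL Y]
      rw [Matrix.smul_mul, Finset.sum_mul, Matrix.trace_smul, Matrix.trace_smul,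
        Matrix.trace_sum, Matrix.trace_sum]
      congr 1
      refine Finset.sum_congr rfl fun m _ => ?_
      exact (Matrix.trace_mul_cycle (L m) Y (L m)ᴴ).symm
    have h1 := eq_one_of_traces _ hG
    rw [← h1, smul_smul, inv_mul_cancel₀ hd', one_smul]
  set T : (Fin d × Fin d) × (Fin d × Fin d) → Matrix (Fin d) (Fin d) ℂ :=
    fun q => (L q.1)ᴴ * L q.2 with hT
  have hTT : ∑ q, T q * (T q)ᴴ = (((d:ℂ))^2)⁻¹ • (1 : Matrix (Fin d) (Fin d) ℂ) := by
    rw [Fintype.sum_prod_type]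
    have inner_eq : ∀ m, ∑ p, T (m,p) * (T (m,p))ᴴ = (d:ℂ)⁻¹ • ((L m)ᴴ * L m) := by
      intro m
      have e1 : ∀ p, T (m,p) * (T (m,p))ᴴ = (L m)ᴴ * ((L p * (L p)ᴴ) * L m) := by
        intro p
        simp only [hT, Matrix.conjTranspose_mul, Matrix.conjTranspose_conjTranspose,
          Matrix.mul_assoc]
      simp_rw [e1]
      rw [← Finset.mul_sum, ← Finset.sum_mul, huni, Matrix.smul_mul, Matrix.one_mul,
        Matrix.mul_smul]
    simp_rw [inner_eq]
    rw [← Finset.smul_sum, htr, smul_smul, sq, mul_inv]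
  have hTT' : ∑ q, (T q)ᴴ * T q = (((d:ℂ))^2)⁻¹ • (1 : Matrix (Fin d) (Fin d) ℂ) := by
    rw [Fintype.sum_prod_type, Finset.sum_comm]
    have inner_eq : ∀ p, ∑ m, (T (m,p))ᴴ * T (m,p) = (d:ℂ)⁻¹ • ((L p)ᴴ * L p) := by
      intro p
      have e1 : ∀ m, (T (m,p))ᴴ * T (m,p) = (L p)ᴴ * ((L m * (L m)ᴴ) * L p) := by
        intro m
        simp only [hT, Matrix.conjTranspose_mul, Matrix.conjTranspose_conjTranspose,
          Matrix.mul_assoc]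
      simp_rw [e1]
      rw [← Finset.mul_sum, ← Finset.sum_mul, huni, Matrix.smul_mul, Matrix.one_mul,
        Matrix.mul_smul]
    simp_rw [inner_eq]
    rw [← Finset.smul_sum, htr, smul_smul, sq, mul_inv]
  have expand : Matrix.trace ((Φ X)ᴴ * (Φ X))
      = (d:ℂ)^2 * ∑ q, Matrix.trace (((T q)ᴴ * X)ᴴ * (X * (T q)ᴴ)) := by
    have hS : Matrix.trace ((∑ m, L m * X * (L m)ᴴ)ᴴ * (∑ m, L m * X * (L m)ᴴ))
        = ∑ q : (Fin d × Fin d) × (Fin d × Fin d),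
            Matrix.trace (((T q)ᴴ * X)ᴴ * (X * (T q)ᴴ)) := by
      rw [Matrix.conjTranspose_sum]
      simp_rw [Matrix.conjTranspose_mul, Matrix.conjTranspose_conjTranspose]
      rw [Finset.sum_mul_sum, Matrix.trace_sum]
      simp_rw [Matrix.trace_sum]
      conv_rhs => rw [Fintype.sum_prod_type]
      refine Finset.sum_congr rfl fun m _ => Finset.sum_congr rfl fun p _ => ?_
      simp only [hT, Matrix.conjTranspose_mul, Matrix.conjTranspose_conjTranspose,
        Matrix.mul_assoc]
      rw [Matrix.trace_mul_comm]
      simp only [Matrix.mul_assoc]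
    rw [hL X, Matrix.conjTranspose_smul, Matrix.smul_mul, Matrix.mul_smul,
      Matrix.trace_smul, Matrix.trace_smul, hS, smul_eq_mul, smul_eq_mul, star_natCast]
    ring
  have hterm : ∀ q, (Matrix.trace (((T q)ᴴ * X)ᴴ * (X * (T q)ᴴ))).re
      ≤ (hsNorm ((T q)ᴴ * X)^2 + hsNorm (X * (T q)ᴴ)^2)/2 := by
    intro q
    have h1 := re_trace_le ((T q)ᴴ * X) (X * (T q)ᴴ)
    nlinarith [hsNorm_nonneg ((T q)ᴴ * X), hsNorm_nonneg (X * (T q)ᴴ),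
      sq_nonneg (hsNorm ((T q)ᴴ * X) - hsNorm (X * (T q)ᴴ))]
  have hsum1 : ∑ q : (Fin d × Fin d) × (Fin d × Fin d), hsNorm ((T q)ᴴ * X)^2
      = ((d:ℝ)^2)⁻¹ * hsNorm X^2 := by
    simp_rw [hsNorm_sq]
    rw [← Complex.re_sum, sum_trace_left T X _ hTT,
      show (((d:ℂ))^2)⁻¹ = ((((d:ℝ)^2)⁻¹ : ℝ) : ℂ) by push_cast; ring,
      Complex.re_ofReal_mul]
  have hsum2 : ∑ q : (Fin d × Fin d) × (Fin d × Fin d), hsNorm (X * (T q)ᴴ)^2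
      = ((d:ℝ)^2)⁻¹ * hsNorm X^2 := by
    simp_rw [hsNorm_sq]
    rw [← Complex.re_sum, sum_trace_right T X _ hTT',
      show (((d:ℂ))^2)⁻¹ = ((((d:ℝ)^2)⁻¹ : ℝ) : ℂ) by push_cast; ring,
      Complex.re_ofReal_mul]
  have hd2 : (0:ℝ) < (d:ℝ)^2 := by positivity
  have main2 : hsNorm (Φ X)^2 ≤ hsNorm X^2 := by
    have e1 : hsNorm (Φ X)^2
        = (d:ℝ)^2 * ∑ q, (Matrix.trace (((T q)ᴴ * X)ᴴ * (X * (T q)ᴴ))).re := by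
      rw [hsNorm_sq, expand,
        show ((d:ℂ))^2 = (((d:ℝ)^2 : ℝ) : ℂ) by push_cast; ring,
        Complex.re_ofReal_mul, Complex.re_sum]
    rw [e1]
    have e2 : ∑ q, (Matrix.trace (((T q)ᴴ * X)ᴴ * (X * (T q)ᴴ))).re
        ≤ ((d:ℝ)^2)⁻¹ * hsNorm X^2 := by
      calc ∑ q, (Matrix.trace (((T q)ᴴ * X)ᴴ * (X * (T q)ᴴ))).re
          ≤ ∑ q : (Fin d × Fin d) × (Fin d × Fin d),
              (hsNorm ((T q)ᴴ * X)^2 + hsNorm (X * (T q)ᴴ)^2)/2 :=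
            Finset.sum_le_sum fun q _ => hterm q
        _ = ((d:ℝ)^2)⁻¹ * hsNorm X^2 := by
            rw [← Finset.sum_div, Finset.sum_add_distrib, hsum1, hsum2]
            ring
    calc (d:ℝ)^2 * ∑ q, (Matrix.trace (((T q)ᴴ * X)ᴴ * (X * (T q)ᴴ))).re
        ≤ (d:ℝ)^2 * (((d:ℝ)^2)⁻¹ * hsNorm X^2) := by
          exact mul_le_mul_of_nonneg_left e2 hd2.le
      _ = hsNorm X^2 := by field_simp
  have := Real.sqrt_le_sqrt main2
  rwa [Real.sqrt_sq (hsNorm_nonneg _), Real.sqrt_sq (hsNorm_nonneg _)] at this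


lemma trace_star {d : ℕ} (Φ Φstar : Matrix (Fin d) (Fin d) ℂ →ₗ[ℂ] Matrix (Fin d) (Fin d) ℂ)
    (hU : Φ 1 = 1)
    (hadj : ∀ A B : Matrix (Fin d) (Fin d) ℂ,
      Matrix.trace (Aᴴ * Φ B) = Matrix.trace ((Φstar A)ᴴ * B))
    (A : Matrix (Fin d) (Fin d) ℂ) : (Φstar A).trace = A.trace := by
  have h := hadj A 1
  rw [hU, Matrix.mul_one, Matrix.mul_one, Matrix.trace_conjTranspose,
    Matrix.trace_conjTranspose] at h
  exact star_injective h.symm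

lemma hsNorm_star_le {d : ℕ} (Φ Φstar : Matrix (Fin d) (Fin d) ℂ →ₗ[ℂ] Matrix (Fin d) (Fin d) ℂ)
    (hΦ : IsChannel Φ) (hU : Φ 1 = 1)
    (hadj : ∀ A B : Matrix (Fin d) (Fin d) ℂ,
      Matrix.trace (Aᴴ * Φ B) = Matrix.trace ((Φstar A)ᴴ * B))
    (X : Matrix (Fin d) (Fin d) ℂ) : hsNorm (Φstar X) ≤ hsNorm X := by
  rcases Nat.eq_zero_or_pos d with hd0 | hd
  · subst hd0
    simp [hsNorm, Matrix.trace]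
  · have h1 : hsNorm (Φstar X)^2 = (Matrix.trace (Xᴴ * Φ (Φstar X))).re := by
      rw [hsNorm_sq, ← hadj X (Φstar X)]
    have h2 := re_trace_le X (Φ (Φstar X))
    have h3 := hsNorm_channel_le hd Φ hΦ.1 hΦ.2 hU (Φstar X)
    have h4 := hsNorm_nonneg (Φstar X)
    have h5 := hsNorm_nonneg X
    rcases eq_or_lt_of_le h4 with h0 | h0
    · exact le_trans (le_of_eq h0.symm) h5
    · have hml : hsNorm (Φstar X) * hsNorm (Φstar X) ≤ hsNorm X * hsNorm (Φstar X) := by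
        nlinarith
      exact le_of_mul_le_mul_right hml h0

lemma hsNorm_sum_smul_le {d n : ℕ} (l : Fin n → ℝ) (hl : ∀ j, 0 ≤ l j)
    (B : Fin n → Matrix (Fin d) (Fin d) ℂ) :
    hsNorm (∑ j, (l j : ℂ) • B j) ≤ ∑ j, l j * hsNorm (B j) := by
  rw [hsNorm_eq, map_sum]
  refine (norm_sum_le _ _).trans ?_
  refine Finset.sum_le_sum fun j _ => ?_
  rw [_root_.map_smul, norm_smul, Complex.norm_real, Real.norm_eq_abs, abs_of_nonneg (hl j),
    ← hsNorm_eq]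

theorem statement10 (d n n' : ℕ)
    (M N : Fin n → Matrix (Fin d) (Fin d) ℂ) (hM : IsPOVM M) (hN : IsPOVM N)
    (Λ : Fin n' → Fin n → ℝ) (hΛpos : ∀ i j, 0 ≤ Λ i j)
    (hΛstoch : ∀ j, ∑ i, Λ i j = 1)
    (Φ Φstar : Matrix (Fin d) (Fin d) ℂ →ₗ[ℂ] Matrix (Fin d) (Fin d) ℂ)
    (hΦ : IsChannel Φ) (hΦunital : Φ 1 = 1)
    (hadj : ∀ A B : Matrix (Fin d) (Fin d) ℂ,
      Matrix.trace (Aᴴ * Φ B) = Matrix.trace ((Φstar A)ᴴ * B)) :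
    davM (fun i : Fin n' => ∑ j, (Λ i j : ℂ) • Φstar (M j))
        (fun i : Fin n' => ∑ j, (Λ i j : ℂ) • Φstar (N j)) ≤
      davM M N := by
  unfold davM
  have hpref : 0 ≤ 1 / (2 * (Fintype.card (Fin d) : ℝ)) := by positivity
  refine mul_le_mul_of_nonneg_left ?_ hpref
  set A : Fin n → Matrix (Fin d) (Fin d) ℂ := fun j => M j - N j with hA
  have hdiff : ∀ i : Fin n',
      (∑ j, (Λ i j : ℂ) • Φstar (M j)) - (∑ j, (Λ i j : ℂ) • Φstar (N j))
        = ∑ j, (Λ i j : ℂ) • Φstar (A j) := by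
    intro i
    rw [← Finset.sum_sub_distrib]
    exact Finset.sum_congr rfl fun j _ => by rw [← smul_sub, ← map_sub]
  have contract : ∀ j, Real.sqrt (hsNorm (Φstar (A j))^2 + (((Φstar (A j)).trace).re)^2)
      ≤ Real.sqrt (hsNorm (A j)^2 + (((A j).trace).re)^2) := by
    intro j
    rw [trace_star Φ Φstar hΦunital hadj (A j)]
    exact g_mono _ _ _ (hsNorm_nonneg _) (hsNorm_star_le Φ Φstar hΦ hΦunital hadj (A j))
  calc ∑ i : Fin n', Real.sqrt
        ((hsNorm ((∑ j, (Λ i j : ℂ) • Φstar (M j)) - (∑ j, (Λ i j : ℂ) • Φstar (N j))))^2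
          + ((Matrix.trace ((∑ j, (Λ i j : ℂ) • Φstar (M j))
              - (∑ j, (Λ i j : ℂ) • Φstar (N j)))).re)^2)
      ≤ ∑ i : Fin n', ∑ j, Λ i j *
          Real.sqrt (hsNorm (Φstar (A j))^2 + (((Φstar (A j)).trace).re)^2) := by
        refine Finset.sum_le_sum fun i _ => ?_
        rw [hdiff i]
        have htr_i : ((∑ j, (Λ i j : ℂ) • Φstar (A j)).trace).re
            = ∑ j, Λ i j * (((Φstar (A j)).trace).re) := by
          rw [Matrix.trace_sum, Complex.re_sum]
          exact Finset.sum_congr rfl fun j _ => by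
            rw [Matrix.trace_smul, smul_eq_mul, Complex.re_ofReal_mul]
        rw [htr_i]
        refine le_trans (g_mono _ _ _ (hsNorm_nonneg _)
          (hsNorm_sum_smul_le (fun j => Λ i j) (hΛpos i) (fun j => Φstar (A j)))) ?_
        refine le_trans (g_sum Finset.univ (fun j => Λ i j * hsNorm (Φstar (A j)))
          (fun j => Λ i j * (((Φstar (A j)).trace).re))) ?_
        refine Finset.sum_le_sum fun j _ => ?_
        exact le_of_eq (g_smul _ _ _ (hΛpos i j))
    _ ≤ ∑ i : Fin n', ∑ j, Λ i j *
          Real.sqrt (hsNorm (A j)^2 + (((A j).trace).re)^2) := by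
        refine Finset.sum_le_sum fun i _ => Finset.sum_le_sum fun j _ => ?_
        exact mul_le_mul_of_nonneg_left (contract j) (hΛpos i j)
    _ = ∑ j, Real.sqrt (hsNorm (A j)^2 + (((A j).trace).re)^2) := by
        rw [Finset.sum_comm]
        simp_rw [← Finset.sum_mul]
        simp_rw [hΛstoch]
        simp
    _ = ∑ j, Real.sqrt (hsNorm (M j - N j)^2 + ((Matrix.trace (M j - N j)).re)^2) := rfl
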